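/- Let (Y_i)_{i≥1} be i.i.d. nonnegative random variables with E[Y_1]=1 and E[Y_1^2] < ∞. For nonnegative reals (α_i) with Σ_i α_i ≤ 1, set α_max := max_i α_i and λ := α_max^{-1/2}. Then E[exp(λ Σ_i ((α_i Y_i) ∧ √α_max) − 2λ)] ≤ exp(E[Y_1^2] − α_max^{-1/2}). -/

import Mathlib

open MeasureTheory ProbabilityTheory Filter
open scoped ENNReal

lemma exp_le_one_add_add_sq {x : ℝ} (h0 : 0 ≤ x) (h1 : x ≤ 1) :
    Real.exp x ≤ 1 + x + x ^ 2 := by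
  have h := Real.abs_exp_sub_one_sub_id_le (x := x) (by rw [abs_of_nonneg h0]; exact h1)
  have h2 := (abs_le.1 h).2
  linarith

/-- exponential Chebyshev bound for the truncated weighted sum:
with `λ = (sup α)^{-1/2}`,
`E[exp(λ * ∑ min(α i * Y i, √(sup α)) − 2λ)] ≤ exp(E[Y²] − (sup α)^{-1/2})`. -/
theorem statement2
    {Ω : Type*} [MeasurableSpace Ω] (μ : Measure Ω) [IsProbabilityMeasure μ]
    (Y : ℕ → Ω → ℝ)
    (hmeas : ∀ i, Measurable (Y i))
    (hindep : iIndepFun Y μ)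
    (hident : ∀ i, IdentDistrib (Y i) (Y 0) μ μ)
    (hnonneg : ∀ i ω, 0 ≤ Y i ω)
    (hmean : ∫ ω, Y 0 ω ∂μ = 1)
    (hmom : Integrable (fun ω => Y 0 ω ^ 2) μ)
    (α : ℕ → ℝ) (hα : ∀ i, 0 ≤ α i) (hsum : (∑' i, α i) ≤ 1) (hαsumm : Summable α)
    (hpos : 0 < ⨆ i, α i) :
    ∫ ω, Real.exp ((⨆ i, α i) ^ (-(1 : ℝ)/2) *
        (∑' i, min (α i * Y i ω) (Real.sqrt (⨆ j, α j))) -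
        2 * (⨆ i, α i) ^ (-(1 : ℝ)/2)) ∂μ ≤
      Real.exp ((∫ ω, Y 0 ω ^ 2 ∂μ) - (⨆ i, α i) ^ (-(1 : ℝ)/2)) := by
  have hm0 : (0:ℝ) ≤ ∫ ω, Y 0 ω ^ 2 ∂μ := integral_nonneg fun ω => sq_nonneg _
  set m := ∫ ω, Y 0 ω ^ 2 ∂μ with hmdef
  set A := ⨆ i, α i with hAdef
  set l := A ^ (-(1 : ℝ)/2) with hldef
  set s := Real.sqrt A with hsdef
  have hbdd : BddAbove (Set.range α) := by
    refine ⟨1, ?_⟩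
    rintro _ ⟨i, rfl⟩
    exact le_trans (Summable.le_tsum hαsumm i fun j _ => hα j) hsum
  have hαA : ∀ i, α i ≤ A := fun i => le_ciSup hbdd i
  have hl_pos : 0 < l := Real.rpow_pos_of_pos hpos _
  have hls : l * s = 1 := by
    rw [hsdef, Real.sqrt_eq_rpow, hldef, ← Real.rpow_add hpos]
    norm_num
  have hl2A : l ^ 2 * A = 1 := by
    have : l ^ 2 * A = A ^ (-(1 : ℝ)/2) * A ^ (-(1 : ℝ)/2) * A ^ (1 : ℝ) := by
      rw [Real.rpow_one, sq, hldef]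
    rw [this, ← Real.rpow_add hpos, ← Real.rpow_add hpos]
    norm_num
  have hs_nonneg : 0 ≤ s := Real.sqrt_nonneg _
  -- the truncated summands
  set T : ℕ → Ω → ℝ := fun i ω => min (α i * Y i ω) s with hTdef
  have hT_nonneg : ∀ i ω, 0 ≤ T i ω := fun i ω =>
    le_min (mul_nonneg (hα i) (hnonneg i ω)) hs_nonneg
  have hT_le_s : ∀ i ω, T i ω ≤ s := fun i ω => min_le_right _ _
  have hT_le : ∀ i ω, T i ω ≤ α i * Y i ω := fun i ω => min_le_left _ _
  have hTmeas : ∀ i, Measurable (T i) := fun i =>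
    ((hmeas i).const_mul (α i)).min measurable_const
  have hlT_le_one : ∀ i ω, l * T i ω ≤ 1 := fun i ω => by
    calc l * T i ω ≤ l * s := mul_le_mul_of_nonneg_left (hT_le_s i ω) hl_pos.le
    _ = 1 := hls
  -- integrability facts
  have hY0_int : Integrable (Y 0) μ := by
    have hb : Integrable (fun ω => 1 + Y 0 ω ^ 2) μ := (integrable_const (1:ℝ)).add hmom
    refine hb.mono' (hmeas 0).aestronglyMeasurable ?_
    filter_upwards with ω
    have h := hnonneg 0 ω
    rw [Real.norm_eq_abs, abs_of_nonneg h]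
    nlinarith [sq_nonneg (Y 0 ω - 1)]
  have hYi_int : ∀ i, Integrable (Y i) μ := fun i => (hident i).integrable_iff.mpr hY0_int
  have hYisq_ident : ∀ i, IdentDistrib (fun ω => Y i ω ^ 2) (fun ω => Y 0 ω ^ 2) μ μ :=
    fun i => (hident i).comp (measurable_id.pow_const 2)
  have hYisq_int : ∀ i, Integrable (fun ω => Y i ω ^ 2) μ :=
    fun i => (hYisq_ident i).integrable_iff.mpr hmom
  have hYi_mean : ∀ i, ∫ ω, Y i ω ∂μ = 1 := fun i => by
    rw [(hident i).integral_eq, hmean]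
  have hYisq_mean : ∀ i, ∫ ω, Y i ω ^ 2 ∂μ = m := fun i => (hYisq_ident i).integral_eq
  have hT_int : ∀ i, Integrable (T i) μ := fun i => by
    refine (integrable_const s).mono' (hTmeas i).aestronglyMeasurable ?_
    filter_upwards with ω
    rw [Real.norm_eq_abs, abs_of_nonneg (hT_nonneg i ω)]
    exact hT_le_s i ω
  have hTsq_int : ∀ i, Integrable (fun ω => T i ω ^ 2) μ := fun i => by
    refine (integrable_const (s ^ 2)).mono' ((hTmeas i).pow_const 2).aestronglyMeasurable ?_
    filter_upwards with ω
    rw [Real.norm_eq_abs, abs_of_nonneg (sq_nonneg _)]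
    exact pow_le_pow_left₀ (hT_nonneg i ω) (hT_le_s i ω) 2
  have hT_int_le : ∀ i, ∫ ω, T i ω ∂μ ≤ α i := fun i => by
    calc ∫ ω, T i ω ∂μ ≤ ∫ ω, α i * Y i ω ∂μ :=
          integral_mono (hT_int i) ((hYi_int i).const_mul _) (fun ω => hT_le i ω)
    _ = α i * ∫ ω, Y i ω ∂μ := integral_const_mul _ _
    _ = α i := by rw [hYi_mean i, mul_one]
  have hTsq_int_le : ∀ i, ∫ ω, T i ω ^ 2 ∂μ ≤ α i ^ 2 * m := fun i => by
    calc ∫ ω, T i ω ^ 2 ∂μ ≤ ∫ ω, α i ^ 2 * Y i ω ^ 2 ∂μ := by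
          refine integral_mono (hTsq_int i) ((hYisq_int i).const_mul _) (fun ω => ?_)
          have := pow_le_pow_left₀ (hT_nonneg i ω) (hT_le i ω) 2
          calc T i ω ^ 2 ≤ (α i * Y i ω) ^ 2 := this
          _ = α i ^ 2 * Y i ω ^ 2 := by ring
    _ = α i ^ 2 * ∫ ω, Y i ω ^ 2 ∂μ := integral_const_mul _ _
    _ = α i ^ 2 * m := by rw [hYisq_mean i]
  -- single-factor exponential moment bound
  have hg_int : ∀ i, Integrable (fun ω => Real.exp (l * T i ω)) μ := fun i => by
    refine (integrable_const (Real.exp 1)).mono'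
      (Real.measurable_exp.comp ((hTmeas i).const_mul l)).aestronglyMeasurable ?_
    filter_upwards with ω
    rw [Real.norm_eq_abs, abs_of_nonneg (Real.exp_pos _).le]
    exact Real.exp_le_exp.2 (hlT_le_one i ω)
  have hfactor : ∀ i, ∫ ω, Real.exp (l * T i ω) ∂μ ≤
      Real.exp (l * α i + l ^ 2 * (α i ^ 2 * m)) := fun i => by
    have hub1 : Integrable (fun ω => 1 + l * T i ω) μ :=
      (integrable_const (1:ℝ)).add ((hT_int i).const_mul l)
    have hub2 : Integrable (fun ω => l ^ 2 * T i ω ^ 2) μ := (hTsq_int i).const_mul (l ^ 2)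
    have hub : Integrable (fun ω => 1 + l * T i ω + l ^ 2 * T i ω ^ 2) μ := hub1.add hub2
    calc ∫ ω, Real.exp (l * T i ω) ∂μ
        ≤ ∫ ω, (1 + l * T i ω + l ^ 2 * T i ω ^ 2) ∂μ := by
          refine integral_mono (hg_int i) hub (fun ω => ?_)
          have h1 := exp_le_one_add_add_sq
            (mul_nonneg hl_pos.le (hT_nonneg i ω)) (hlT_le_one i ω)
          calc Real.exp (l * T i ω) ≤ 1 + l * T i ω + (l * T i ω) ^ 2 := h1
          _ = 1 + l * T i ω + l ^ 2 * T i ω ^ 2 := by ring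
    _ = 1 + l * ∫ ω, T i ω ∂μ + l ^ 2 * ∫ ω, T i ω ^ 2 ∂μ := by
          rw [integral_add hub1 hub2,
            integral_add (integrable_const (1:ℝ)) ((hT_int i).const_mul l),
            integral_const_mul, integral_const_mul]
          simp
    _ ≤ 1 + l * α i + l ^ 2 * (α i ^ 2 * m) := by
          have h1 := hT_int_le i
          have h2 := hTsq_int_le i
          nlinarith [hl_pos, sq_nonneg l]
    _ ≤ Real.exp (l * α i + l ^ 2 * (α i ^ 2 * m)) := by
          have := Real.add_one_le_exp (l * α i + l ^ 2 * (α i ^ 2 * m))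
          linarith
  -- independence in ℝ≥0∞ land
  set G : ℕ → Ω → ℝ≥0∞ :=
    fun i => (fun x : ℝ => ENNReal.ofReal (Real.exp (l * min (α i * x) s))) ∘ Y i with hGdef
  have hφmeas : ∀ i, Measurable (fun x : ℝ => ENNReal.ofReal (Real.exp (l * min (α i * x) s))) :=
    fun i => ENNReal.measurable_ofReal.comp
      (Real.measurable_exp.comp (((measurable_id.const_mul (α i)).min measurable_const).const_mul l))
  have hGmeas : ∀ i, Measurable (G i) := fun i => (hφmeas i).comp (hmeas i)
  have hGindep : iIndepFun G μ := hindep.comp _ hφmeas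
  have hGeq : ∀ i ω, G i ω = ENNReal.ofReal (Real.exp (l * T i ω)) := fun i ω => rfl
  have hGfact : ∀ i, ∫⁻ ω, G i ω ∂μ ≤
      ENNReal.ofReal (Real.exp (l * α i + l ^ 2 * (α i ^ 2 * m))) := fun i => by
    have heq : ∫⁻ ω, G i ω ∂μ = ENNReal.ofReal (∫ ω, Real.exp (l * T i ω) ∂μ) :=
      (ofReal_integral_eq_lintegral_ofReal (hg_int i)
        (ae_of_all _ fun ω => (Real.exp_pos _).le)).symm
    rw [heq]
    exact ENNReal.ofReal_le_ofReal (hfactor i)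
  -- product formula for finite products
  have hprodmeas : ∀ n : ℕ, Measurable (∏ i ∈ Finset.range n, G i) := fun n => by
    rw [Finset.prod_fn]
    exact Finset.measurable_prod _ fun i _ => hGmeas i
  have hprod : ∀ n : ℕ, ∫⁻ ω, ∏ i ∈ Finset.range n, G i ω ∂μ =
      ∏ i ∈ Finset.range n, ∫⁻ ω, G i ω ∂μ := by
    intro n
    induction n with
    | zero => simp
    | succ n ih =>
      have hsplit : (fun ω => ∏ i ∈ Finset.range (n + 1), G i ω) =
          fun ω => ((∏ i ∈ Finset.range n, G i) * G n) ω := by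
        funext ω
        simp [Finset.prod_range_succ, Finset.prod_apply]
      calc ∫⁻ ω, ∏ i ∈ Finset.range (n + 1), G i ω ∂μ
          = ∫⁻ ω, ((∏ i ∈ Finset.range n, G i) * G n) ω ∂μ := by rw [hsplit]
      _ = (∫⁻ ω, (∏ i ∈ Finset.range n, G i) ω ∂μ) * ∫⁻ ω, G n ω ∂μ :=
          lintegral_mul_eq_lintegral_mul_lintegral_of_indepFun (hprodmeas n) (hGmeas n)
            (hGindep.indepFun_prod_range_succ hGmeas n)
      _ = (∫⁻ ω, ∏ i ∈ Finset.range n, G i ω ∂μ) * ∫⁻ ω, G n ω ∂μ := by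
          simp [Finset.prod_apply]
      _ = ∏ i ∈ Finset.range (n + 1), ∫⁻ ω, G i ω ∂μ := by
          rw [ih, Finset.prod_range_succ]
  -- per-n bound for the partial sums
  have ha_le : ∀ i, l * α i + l ^ 2 * (α i ^ 2 * m) ≤ (l + m) * α i := fun i => by
    have h1 : l ^ 2 * α i ≤ 1 := by
      calc l ^ 2 * α i ≤ l ^ 2 * A := by
            exact mul_le_mul_of_nonneg_left (hαA i) (sq_nonneg l)
      _ = 1 := hl2A
    nlinarith [mul_nonneg hm0 (hα i), hα i, hm0]
  have hstep : ∀ n : ℕ, ∫⁻ ω, ENNReal.ofReal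
      (Real.exp (l * ∑ i ∈ Finset.range n, T i ω - 2 * l)) ∂μ ≤
      ENNReal.ofReal (Real.exp (m - l)) := by
    intro n
    have heq : ∀ ω, ENNReal.ofReal (Real.exp (l * ∑ i ∈ Finset.range n, T i ω - 2 * l)) =
        ENNReal.ofReal (Real.exp (-(2 * l))) * ∏ i ∈ Finset.range n, G i ω := by
      intro ω
      have : l * ∑ i ∈ Finset.range n, T i ω - 2 * l =
          -(2 * l) + ∑ i ∈ Finset.range n, l * T i ω := by
        rw [Finset.mul_sum]; ring
      rw [this, Real.exp_add, Real.exp_sum,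
        ENNReal.ofReal_mul (Real.exp_pos _).le,
        ENNReal.ofReal_prod_of_nonneg (fun i _ => (Real.exp_pos _).le)]
      rfl
    calc ∫⁻ ω, ENNReal.ofReal (Real.exp (l * ∑ i ∈ Finset.range n, T i ω - 2 * l)) ∂μ
        = ∫⁻ ω, ENNReal.ofReal (Real.exp (-(2 * l))) * ∏ i ∈ Finset.range n, G i ω ∂μ := by
          exact lintegral_congr fun ω => heq ω
    _ = ENNReal.ofReal (Real.exp (-(2 * l))) * ∫⁻ ω, ∏ i ∈ Finset.range n, G i ω ∂μ := by
          rw [lintegral_const_mul _ (Finset.measurable_prod (Finset.range n)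
            (fun i _ => hGmeas i))]
    _ = ENNReal.ofReal (Real.exp (-(2 * l))) * ∏ i ∈ Finset.range n, ∫⁻ ω, G i ω ∂μ := by
          rw [hprod n]
    _ ≤ ENNReal.ofReal (Real.exp (-(2 * l))) *
        ∏ i ∈ Finset.range n, ENNReal.ofReal (Real.exp (l * α i + l ^ 2 * (α i ^ 2 * m))) := by
          exact mul_le_mul_right (Finset.prod_le_prod' fun i _ => hGfact i) _
    _ = ENNReal.ofReal (Real.exp (-(2 * l) +
          ∑ i ∈ Finset.range n, (l * α i + l ^ 2 * (α i ^ 2 * m)))) := by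
          rw [← ENNReal.ofReal_prod_of_nonneg (fun i _ => (Real.exp_pos _).le),
            ← Real.exp_sum, ← ENNReal.ofReal_mul (Real.exp_pos _).le, ← Real.exp_add]
    _ ≤ ENNReal.ofReal (Real.exp (m - l)) := by
          apply ENNReal.ofReal_le_ofReal
          apply Real.exp_le_exp.2
          have hsum_n : ∑ i ∈ Finset.range n, α i ≤ 1 :=
            le_trans (Summable.sum_le_tsum (Finset.range n) (fun j _ => hα j) hαsumm) hsum
          have hlm : 0 ≤ l + m := by linarith [hl_pos]
          have h1 : ∑ i ∈ Finset.range n, (l * α i + l ^ 2 * (α i ^ 2 * m)) ≤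
              (l + m) * ∑ i ∈ Finset.range n, α i := by
            rw [Finset.mul_sum]
            exact Finset.sum_le_sum fun i _ => ha_le i
          have h2 : (l + m) * ∑ i ∈ Finset.range n, α i ≤ (l + m) * 1 :=
            mul_le_mul_of_nonneg_left hsum_n hlm
          linarith
  -- pointwise liminf bound
  have hpt : ∀ ω, ENNReal.ofReal (Real.exp (l * (∑' i, T i ω) - 2 * l)) ≤
      Filter.liminf (fun n => ENNReal.ofReal
        (Real.exp (l * ∑ i ∈ Finset.range n, T i ω - 2 * l))) Filter.atTop := by
    intro ω
    by_cases hsummω : Summable (fun i => T i ω)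
    · have htends : Tendsto (fun n => ∑ i ∈ Finset.range n, T i ω) atTop
          (nhds (∑' i, T i ω)) := hsummω.hasSum.tendsto_sum_nat
      have h2 : Tendsto (fun n => l * ∑ i ∈ Finset.range n, T i ω - 2 * l) atTop
          (nhds (l * (∑' i, T i ω) - 2 * l)) := (htends.const_mul l).sub_const (2 * l)
      have h3 : Tendsto (fun n => ENNReal.ofReal
          (Real.exp (l * ∑ i ∈ Finset.range n, T i ω - 2 * l))) atTop
          (nhds (ENNReal.ofReal (Real.exp (l * (∑' i, T i ω) - 2 * l)))) :=
        (ENNReal.continuous_ofReal.tendsto _).comp ((Real.continuous_exp.tendsto _).comp h2)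
      exact h3.liminf_eq.ge
    · have h0 : (∑' i, T i ω) = 0 := tsum_eq_zero_of_not_summable hsummω
      refine le_liminf_of_le (by isBoundedDefault) (Filter.Eventually.of_forall fun n => ?_)
      apply ENNReal.ofReal_le_ofReal
      apply Real.exp_le_exp.2
      rw [h0]
      have hSn : 0 ≤ ∑ i ∈ Finset.range n, T i ω :=
        Finset.sum_nonneg fun i _ => hT_nonneg i ω
      nlinarith [hl_pos]
  -- lintegral bound for the full sum
  have hmeasn : ∀ n : ℕ, Measurable (fun ω => ENNReal.ofReal
      (Real.exp (l * ∑ i ∈ Finset.range n, T i ω - 2 * l))) := fun n =>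
    ENNReal.measurable_ofReal.comp (Real.measurable_exp.comp
      (((Finset.measurable_sum (Finset.range n) (fun i _ => hTmeas i)).const_mul l).sub_const _))
  have hlint : ∫⁻ ω, ENNReal.ofReal (Real.exp (l * (∑' i, T i ω) - 2 * l)) ∂μ ≤
      ENNReal.ofReal (Real.exp (m - l)) := by
    calc ∫⁻ ω, ENNReal.ofReal (Real.exp (l * (∑' i, T i ω) - 2 * l)) ∂μ
        ≤ ∫⁻ ω, Filter.liminf (fun n => ENNReal.ofReal
          (Real.exp (l * ∑ i ∈ Finset.range n, T i ω - 2 * l))) Filter.atTop ∂μ :=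
          lintegral_mono fun ω => hpt ω
    _ ≤ Filter.liminf (fun n => ∫⁻ ω, ENNReal.ofReal
          (Real.exp (l * ∑ i ∈ Finset.range n, T i ω - 2 * l)) ∂μ) Filter.atTop :=
          lintegral_liminf_le hmeasn
    _ ≤ Filter.liminf (fun _ : ℕ => ENNReal.ofReal (Real.exp (m - l))) Filter.atTop :=
          liminf_le_liminf (Filter.Eventually.of_forall fun n => hstep n)
    _ = ENNReal.ofReal (Real.exp (m - l)) := liminf_const _
  -- conclude for the Bochner integral
  show ∫ ω, Real.exp (l * (∑' i, T i ω) - 2 * l) ∂μ ≤ Real.exp (m - l)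
  by_cases hFint : Integrable (fun ω => Real.exp (l * (∑' i, T i ω) - 2 * l)) μ
  · rw [integral_eq_lintegral_of_nonneg_ae (ae_of_all _ fun ω => (Real.exp_pos _).le) hFint.1]
    calc (∫⁻ ω, ENNReal.ofReal (Real.exp (l * (∑' i, T i ω) - 2 * l)) ∂μ).toReal
        ≤ (ENNReal.ofReal (Real.exp (m - l))).toReal :=
          ENNReal.toReal_mono ENNReal.ofReal_ne_top hlint
    _ = Real.exp (m - l) := ENNReal.toReal_ofReal (Real.exp_pos _).le
  · rw [integral_undef hFint]
    exact (Real.exp_pos _).le
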